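/- Let T = T_{α,β} be the d×d matrix with diagonal entries α and off-diagonal entries β, and let D be a diagonal matrix with diagonal entries λ₁,…,λ_d. Then det(zI + D + sT) = p(z) + Σ_{k=1}^d a_k s^k p^{(k)}(z), where p(z) = ∏_{i=1}^d (z + λ_i) and a_k = (1/k!)·(α-β)^{k-1}(α+(k-1)β). -/

import Mathlib

open Polynomial

/-- The perturbed polynomial `p_a(·, s) = p + ∑_{k=1}^d a_k s^k p^{(k)}`. -/
noncomputable def NuijPencil (d : ℕ) (a : ℕ → ℝ) (p : Polynomial ℝ) (s : ℝ) : Polynomial ℝ :=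
  p + ∑ k ∈ Finset.Icc 1 d, (a k * s ^ k) • (Polynomial.derivative^[k] p)

open Matrix Finset

lemma rank_one_det_inv {d : ℕ} (μ : Fin d → ℝ) (c : ℝ) (hμ : ∀ i, μ i ≠ 0) :
    Matrix.det (Matrix.diagonal μ + Matrix.of (fun _ _ : Fin d => c))
      = ∏ i, μ i + c * ∑ i, ∏ j ∈ Finset.univ.erase i, μ j := by
  have hc : (Matrix.of (fun _ _ : Fin d => c))
      = Matrix.replicateCol Unit (fun _ => c) * Matrix.replicateRow Unit (fun _ => (1:ℝ)) := by
    ext i j; simp [Matrix.mul_apply]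
  have hA : IsUnit (Matrix.diagonal μ).det := by
    simp only [det_diagonal]
    exact (Finset.prod_ne_zero_iff.2 fun i _ => hμ i).isUnit
  have hdiaginv : (Matrix.diagonal μ)⁻¹ = Matrix.diagonal (fun i => (μ i)⁻¹) := by
    apply Matrix.inv_eq_right_inv
    rw [Matrix.diagonal_mul_diagonal]
    rw [show (fun i => μ i * (μ i)⁻¹) = fun _ => (1:ℝ) from funext fun i => mul_inv_cancel₀ (hμ i)]
    exact Matrix.diagonal_one
  rw [hc, Matrix.det_add_replicateCol_mul_replicateRow hA, hdiaginv]
  rw [det_diagonal, det_unique]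
  simp only [Matrix.add_apply, Matrix.one_apply_eq, Matrix.mul_apply, Matrix.replicateRow_apply,
    Matrix.replicateCol_apply, Matrix.diagonal_apply, Finset.sum_ite_eq, Finset.mem_univ, if_true]
  rw [mul_add, mul_one, Finset.mul_sum]
  congr 1
  rw [Finset.mul_sum]
  apply Finset.sum_congr rfl
  intro i _
  have h1 : (∑ x : Fin d, (1:ℝ) * if x = i then (μ x)⁻¹ else 0) = (μ i)⁻¹ := by
    simp
  have h2 : (∏ j ∈ Finset.univ.erase i, μ j) * μ i = ∏ j, μ j :=
    Finset.prod_erase_mul _ _ (Finset.mem_univ i)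
  rw [h1, ← h2]
  rw [mul_assoc, ← mul_assoc (μ i), mul_inv_cancel₀ (hμ i), one_mul, mul_comm]

lemma rank_one_det {d : ℕ} (μ : Fin d → ℝ) (c : ℝ) :
    Matrix.det (Matrix.diagonal μ + Matrix.of (fun _ _ : Fin d => c))
      = ∏ i, μ i + c * ∑ i, ∏ j ∈ Finset.univ.erase i, μ j := by
  set P : Polynomial ℝ :=
    Matrix.det (Matrix.diagonal (fun i => Polynomial.C (μ i) + Polynomial.X)
      + Matrix.of (fun _ _ : Fin d => Polynomial.C c)) with hPdef
  set Q : Polynomial ℝ :=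
    ∏ i, (Polynomial.C (μ i) + Polynomial.X)
      + Polynomial.C c * ∑ i, ∏ j ∈ Finset.univ.erase i, (Polynomial.C (μ j) + Polynomial.X)
    with hQdef
  have hP : ∀ t : ℝ, Polynomial.eval t P
      = Matrix.det (Matrix.diagonal (fun i => μ i + t) + Matrix.of (fun _ _ : Fin d => c)) := by
    intro t
    rw [hPdef, ← Polynomial.coe_evalRingHom, RingHom.map_det]
    congr 1
    ext i j
    by_cases h : i = j <;>
      simp [h, Matrix.diagonal, Matrix.of_apply, Matrix.add_apply]
  have hQ : ∀ t : ℝ, Polynomial.eval t Q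
      = ∏ i, (μ i + t) + c * ∑ i, ∏ j ∈ Finset.univ.erase i, (μ j + t) := by
    intro t
    simp [hQdef, Polynomial.eval_prod, Polynomial.eval_finset_sum]
  have key : P = Q := by
    apply Polynomial.eq_of_infinite_eval_eq
    apply Set.Infinite.mono (h := ?_) (s := (Set.range fun i : Fin d => -μ i)ᶜ)
    · exact (Set.finite_range _).infinite_compl
    · intro t ht
      have hμt : ∀ i, μ i + t ≠ 0 := by
        intro i h
        exact ht ⟨i, show -μ i = t by linarith⟩
      simp only [Set.mem_setOf_eq, hP t, hQ t, rank_one_det_inv _ c hμt]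
  have h0 := congrArg (Polynomial.eval 0) key
  rw [hP 0, hQ 0] at h0
  simpa using h0

lemma taylor_sum (p : Polynomial ℝ) (n : ℕ) (h : p.natDegree < n + 1) (z c : ℝ) :
    p.eval (c + z) = ∑ k ∈ Finset.range (n + 1),
      Polynomial.eval z (Polynomial.derivative^[k] p) * c ^ k / (Nat.factorial k : ℝ) := by
  rw [← Polynomial.taylor_eval z p c,
    Polynomial.eval_eq_sum_range' (by rwa [Polynomial.natDegree_taylor]) c]
  apply Finset.sum_congr rfl
  intro k hk
  rw [Polynomial.taylor_coeff]
  have hfac : (Nat.factorial k : ℝ) ≠ 0 := Nat.cast_ne_zero.mpr (Nat.factorial_ne_zero k)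
  have hder : (Nat.factorial k : ℝ) * (Polynomial.hasseDeriv k p).eval z
      = (Polynomial.derivative^[k] p).eval z := by
    rw [← Polynomial.factorial_smul_hasseDeriv (R := ℝ) (k := k)]
    simp
  rw [← hder]
  field_simp

lemma sum_Icc_shift (f : ℕ → ℝ) (d : ℕ) :
    ∑ k ∈ Finset.Icc 1 d, f k = ∑ k ∈ Finset.range d, f (k + 1) := by
  rw [← Finset.Ico_add_one_right_eq_Icc, Finset.sum_Ico_eq_sum_range]
  simp [add_comm]

/-- With `T = T_{α,β}`, `D = diag(λ₁,…,λ_d)` and `p(z) = ∏ (z + λᵢ)`, one has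
`det(zI + D + sT) = p(z) + ∑_{k=1}^d a_k s^k p^{(k)}(z)` where
`a_k = (1/k!)(α-β)^{k-1}(α+(k-1)β)`. -/
theorem det_toeplitz_pencil (d : ℕ) (α β : ℝ) (lam : Fin d → ℝ) (z s : ℝ) :
    Matrix.det (z • (1 : Matrix (Fin d) (Fin d) ℝ) + Matrix.diagonal lam
        + s • Matrix.of (fun i j : Fin d => if i = j then α else β))
      = Polynomial.eval z
          (NuijPencil d
            (fun k => (1 / (Nat.factorial k : ℝ)) * (α - β) ^ (k - 1) * (α + ((k : ℝ) - 1) * β))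
            (∏ i, (X + Polynomial.C (lam i))) s) := by
  classical
  set p : Polynomial ℝ := ∏ i, (X + Polynomial.C (lam i)) with hp
  set c : ℝ := s * (α - β) with hc
  set w : ℝ := c + z with hw
  have hM : z • (1 : Matrix (Fin d) (Fin d) ℝ) + Matrix.diagonal lam
      + s • Matrix.of (fun i j : Fin d => if i = j then α else β)
      = Matrix.diagonal (fun i => w + lam i) + Matrix.of (fun _ _ : Fin d => s * β) := by
    ext i j
    by_cases h : i = j
    · subst h
      simp [Matrix.diagonal, hw, hc]
      ring
    · simp [Matrix.diagonal_apply_ne _ h, h, Matrix.one_apply_ne h]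
  rw [hM, rank_one_det]
  have hdeg : p.natDegree = d := by
    rw [hp, Polynomial.natDegree_prod_of_monic _ _ fun i _ => Polynomial.monic_X_add_C _]
    simp
  have hprod : ∏ i, (w + lam i) = p.eval w := by
    simp [hp, Polynomial.eval_prod]
  have hD : Polynomial.derivative p
      = ∑ i, (∏ j ∈ Finset.univ.erase i, (X + Polynomial.C (lam j))) := by
    rw [hp, Finset.prod_eq_multiset_prod, Polynomial.derivative_prod]
    simp only [Polynomial.derivative_add, Polynomial.derivative_X, Polynomial.derivative_C,
      add_zero, mul_one]
    rw [Finset.sum_eq_multiset_sum]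
    apply congrArg Multiset.sum
    apply Multiset.map_congr rfl
    intro i _
    rw [Finset.prod_eq_multiset_prod, Finset.erase_val]
  have hsum : ∑ i, ∏ j ∈ Finset.univ.erase i, (w + lam j) = (Polynomial.derivative p).eval w := by
    rw [hD]
    simp [Polynomial.eval_finset_sum, Polynomial.eval_prod]
  rw [hprod, hsum]
  have ht1 : p.eval w = ∑ k ∈ Finset.range (d + 1),
      Polynomial.eval z (Polynomial.derivative^[k] p) * c ^ k / (Nat.factorial k : ℝ) := by
    rw [hw]
    exact taylor_sum p d (by omega) z c
  have ht2 : (Polynomial.derivative p).eval w = ∑ k ∈ Finset.range (d + 1),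
      Polynomial.eval z (Polynomial.derivative^[k + 1] p) * c ^ k / (Nat.factorial k : ℝ) := by
    rw [hw, taylor_sum (Polynomial.derivative p) d
      (lt_of_le_of_lt (Polynomial.natDegree_derivative_le p) (by omega)) z c]
    apply Finset.sum_congr rfl
    intro k _
    rw [Function.iterate_succ_apply]
  rw [ht1, ht2]
  have hzero : Polynomial.eval z (Polynomial.derivative^[d + 1] p) = 0 := by
    rw [Polynomial.iterate_derivative_eq_zero (by omega : p.natDegree < d + 1)]
    simp
  rw [NuijPencil]
  simp only [Polynomial.eval_add, Polynomial.eval_finset_sum, Polynomial.eval_smul, smul_eq_mul]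
  rw [sum_Icc_shift]
  rw [Finset.sum_range_succ
    (fun k => Polynomial.eval z (Polynomial.derivative^[k + 1] p) * c ^ k / (Nat.factorial k : ℝ)) d,
    hzero]
  rw [Finset.sum_range_succ'
    (fun k => Polynomial.eval z (Polynomial.derivative^[k] p) * c ^ k / (Nat.factorial k : ℝ)) d]
  simp only [pow_zero, Nat.factorial_zero, Nat.cast_one, mul_one, div_one, zero_mul, zero_div,
    add_zero, Function.iterate_zero_apply]
  rw [Finset.mul_sum, add_right_comm, ← Finset.sum_add_distrib,
    add_comm _ (Polynomial.eval z p)]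
  congr 1
  apply Finset.sum_congr rfl
  intro k _
  have hfac : (Nat.factorial k : ℝ) ≠ 0 := Nat.cast_ne_zero.mpr (Nat.factorial_ne_zero k)
  have hfac1 : (Nat.factorial (k + 1) : ℝ) ≠ 0 := Nat.cast_ne_zero.mpr (Nat.factorial_ne_zero _)
  simp only [hc, mul_pow]
  simp only [Nat.add_sub_cancel, Nat.factorial_succ, Nat.cast_mul, Nat.cast_add, Nat.cast_one]
  field_simp
  ring
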